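/- Let α, τ, ξ be real numbers with 1/2 ≤ α < 1, 0 < ξ < 1/4 and 1+α ≤ τ < 2. Then −π < arg T_s ≤ −π/2 and −π/2 < arg T_B < 0, where arg denotes the principal argument with values in (−π, π]. In particular arg T_s ≠ arg T_B. -/

import Mathlib

/-- The term `T_s` of the generalised Fredholm symbol on the segment `Γ₁`. -/
noncomputable def Ts (α τ ξ : ℝ) : ℂ :=
  Complex.sin ((Real.pi : ℂ) * (1 - (τ : ℂ) + (α : ℂ) - Complex.I * (ξ : ℂ))) /
    Complex.sin ((Real.pi : ℂ) * (1 - (τ : ℂ) + 2 * (α : ℂ) - Complex.I * (ξ : ℂ)))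

/-- The term `T_B` of the generalised Fredholm symbol on the segment `Γ₁`. -/
noncomputable def TB (α τ ξ : ℝ) : ℂ :=
  Complex.sin ((Real.pi : ℂ) * (α : ℂ)) / (Real.pi : ℂ) *
      Complex.Gamma ((τ : ℂ) - 2 * (α : ℂ) + 1 + Complex.I * (ξ : ℂ)) *
      Complex.Gamma (2 * (α : ℂ)) /
    Complex.Gamma ((τ : ℂ) + 1 + Complex.I * (ξ : ℂ))

set_option maxHeartbeats 1000000

open Real intervalIntegral

lemma sin_horiz (A B : ℝ) : Complex.sin ((A:ℂ) - (B:ℂ) * Complex.I)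
    = ((Real.sin A * Real.cosh B : ℝ) : ℂ) - ((Real.cos A * Real.sinh B : ℝ):ℂ) * Complex.I := by
  rw [Complex.sin_sub, Complex.cos_mul_I, Complex.sin_mul_I]
  push_cast
  ring

lemma aux_Ts (α τ ξ : ℝ) (hα : 1/2 ≤ α) (hα' : α < 1) (hξ : 0 < ξ)
    (hτ : 1+α ≤ τ) (hτ' : τ < 2) : (Ts α τ ξ).re ≤ 0 ∧ (Ts α τ ξ).im < 0 := by
  have hπ := Real.pi_pos
  set A : ℝ := π * (1 - τ + α) with hA
  set A' : ℝ := π * (1 - τ + 2*α) with hA'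
  set B : ℝ := π * ξ with hB
  have harg1 : (Real.pi : ℂ) * (1 - (τ : ℂ) + (α : ℂ) - Complex.I * (ξ : ℂ)) = (A:ℂ) - (B:ℂ)*Complex.I := by
    rw [hA, hB]; push_cast; ring
  have harg2 : (Real.pi : ℂ) * (1 - (τ : ℂ) + 2*(α : ℂ) - Complex.I * (ξ : ℂ)) = (A':ℂ) - (B:ℂ)*Complex.I := by
    rw [hA', hB]; push_cast; ring
  have hTs : Ts α τ ξ =
      (((Real.sin A * Real.cosh B : ℝ) : ℂ) - ((Real.cos A * Real.sinh B : ℝ):ℂ) * Complex.I) /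
      (((Real.sin A' * Real.cosh B : ℝ) : ℂ) - ((Real.cos A' * Real.sinh B : ℝ):ℂ) * Complex.I) := by
    rw [Ts, harg1, harg2, sin_horiz, sin_horiz]
  -- basic real facts
  have hc : (1:ℝ) ≤ Real.cosh B := Real.one_le_cosh B
  have hs : 0 < Real.sinh B := Real.sinh_pos_iff.2 (by positivity)
  have hsinα : 0 < Real.sin (π * α) := Real.sin_pos_of_pos_of_lt_pi (by positivity)
    (by nlinarith)
  have hcosα : Real.cos (π * α) ≤ 0 := by
    have := Real.cos_nonpos_of_pi_div_two_le_of_le (x := π * α) (by nlinarith) (by nlinarith)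
    exact this
  have hAA' : A - A' = -(π * α) := by rw [hA, hA']; ring
  -- cos (A+A') ≥ cos (π α)
  have habs : |A + A'| ≤ π * α := by
    rw [abs_le, hA, hA']
    constructor <;> nlinarith
  have hcos2 : Real.cos (π*α) ≤ Real.cos (A + A') := by
    rw [← Real.cos_abs (A+A')]
    apply Real.cos_le_cos_of_nonneg_of_le_pi (abs_nonneg _) (by nlinarith)
    exact habs
  have hker : Real.cosh B ^ 2 - Real.sinh B ^ 2 = 1 := Real.cosh_sq_sub_sinh_sq B
  have hQ : 0 < Complex.normSq (((Real.sin A' * Real.cosh B : ℝ) : ℂ) - ((Real.cos A' * Real.sinh B : ℝ):ℂ) * Complex.I) := by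
    apply Complex.normSq_pos.2
    intro h
    have hre := congrArg Complex.re h
    simp only [Complex.sub_re, Complex.ofReal_re, Complex.mul_re, Complex.I_re, Complex.I_im,
      Complex.ofReal_im, Complex.zero_re, mul_zero, mul_one, zero_mul, sub_zero, zero_sub] at hre
    -- the real part is sin A' * cosh B which is nonzero
    have hsA' : 0 < Real.sin A' := by
      apply Real.sin_pos_of_pos_of_lt_pi
      · rw [hA']; nlinarith
      · rw [hA']; nlinarith
    nlinarith
  set c := Real.cosh B
  set s := Real.sinh B
  constructor
  · rw [hTs, Complex.div_re]
    simp only [Complex.sub_re, Complex.sub_im, Complex.ofReal_re, Complex.ofReal_im,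
      Complex.mul_re, Complex.mul_im, Complex.I_re, Complex.I_im, mul_zero, mul_one,
      zero_mul, sub_zero, zero_sub, zero_add]
    rw [← add_div]
    apply div_nonpos_of_nonpos_of_nonneg _ (Complex.normSq_nonneg _)
    have e1 : Real.cos (π*α) = Real.cos A * Real.cos A' + Real.sin A * Real.sin A' := by
      rw [← Real.cos_sub, hAA', Real.cos_neg]
    have e2 : Real.cos (A + A') = Real.cos A * Real.cos A' - Real.sin A * Real.sin A' :=
      Real.cos_add A A'
    nlinarith [mul_nonneg (neg_nonneg.2 hcosα) (by nlinarith : (0:ℝ) ≤ c^2 + s^2 - 1)]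
  · rw [hTs, Complex.div_im]
    simp only [Complex.sub_re, Complex.sub_im, Complex.ofReal_re, Complex.ofReal_im,
      Complex.mul_re, Complex.mul_im, Complex.I_re, Complex.I_im, mul_zero, mul_one,
      zero_mul, sub_zero, zero_sub, zero_add]
    rw [div_sub_div_same]
    apply div_neg_of_neg_of_pos _ hQ
    have e3 : Real.sin (π*α) = -(Real.sin A * Real.cos A' - Real.cos A * Real.sin A') := by
      rw [← Real.sin_sub, hAA', Real.sin_neg, neg_neg]
    have hcs : 0 < s * c := mul_pos hs (lt_of_lt_of_le one_pos hc)
    have key : -(Real.cos A * s) * (Real.sin A' * c) - Real.sin A * c * -(Real.cos A' * s)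
        = -(s * c * Real.sin (π*α)) := by rw [e3]; ring
    simp only [add_zero]
    have key : -(Real.cos A * s) * (Real.sin A' * c) - Real.sin A * c * -(Real.cos A' * s)
        = -(s * c * Real.sin (π*α)) := by rw [e3]; ring
    rw [key]
    simpa using mul_pos hcs hsinα

lemma TB_eq (α τ ξ : ℝ) (hα : 0 < α) (hα' : α < 1) (hξ : 0 < ξ) (hτ : 1 + α ≤ τ) :
    TB α τ ξ = ((Real.sin (π * α) / π : ℝ) : ℂ) *
      Complex.betaIntegral (((τ - 2*α + 1 : ℝ) : ℂ) + (ξ:ℝ) * Complex.I) ((2*α : ℝ) : ℂ) := by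
  have hπ := Real.pi_pos
  set z : ℂ := ((τ - 2*α + 1 : ℝ) : ℂ) + (ξ:ℝ) * Complex.I with hz
  set w : ℂ := ((2*α : ℝ) : ℂ) with hw
  have hzre : 0 < z.re := by simp [hz]; nlinarith
  have hwre : 0 < w.re := by simp [hw]; nlinarith
  have hbeta := Complex.Gamma_mul_Gamma_eq_betaIntegral hzre hwre
  have hzw : z + w = (τ : ℂ) + 1 + Complex.I * (ξ : ℂ) := by rw [hz, hw]; push_cast; ring
  have harg1 : (τ : ℂ) - 2 * (α : ℂ) + 1 + Complex.I * (ξ : ℂ) = z := by rw [hz]; push_cast; ring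
  have harg2 : (2 * (α : ℂ)) = w := by rw [hw]; push_cast; ring
  have hΓne : Complex.Gamma ((τ : ℂ) + 1 + Complex.I * (ξ : ℂ)) ≠ 0 := by
    rw [← hzw]
    apply Complex.Gamma_ne_zero_of_re_pos
    rw [Complex.add_re]
    simp [hz, hw]; nlinarith
  have hsin : Complex.sin ((Real.pi : ℂ) * (α : ℂ)) = ((Real.sin (π * α) : ℝ) : ℂ) := by
    push_cast [Complex.ofReal_sin]
    norm_num
  rw [TB, harg1, harg2, hsin]
  rw [mul_assoc, hbeta, ← hzw]
  rw [Complex.ofReal_div]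
  rw [← hzw] at hΓne
  generalize hG : Complex.Gamma (z + w) = G at hΓne ⊢
  generalize z.betaIntegral w = Bi
  field_simp

lemma F_eq (x y ξ : ℝ) (hx : 1 < x) (t : ℝ) (ht0 : 0 ≤ t) (ht1 : t ≤ 1) :
    (t:ℂ)^(((x:ℝ):ℂ) + (ξ:ℝ) * Complex.I - 1) * (1 - (t:ℂ))^(((y:ℝ):ℂ) - 1)
    = ((t^(x-1) * (1-t)^(y-1) * Real.cos (ξ * Real.log t) : ℝ) : ℂ)
      + ((t^(x-1) * (1-t)^(y-1) * Real.sin (ξ * Real.log t) : ℝ) : ℂ) * Complex.I := by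
  have h2 : (1 - (t:ℂ))^(((y:ℝ):ℂ) - 1) = (((1-t)^(y-1) : ℝ) : ℂ) := by
    rw [show (1 : ℂ) - (t:ℂ) = ((1 - t : ℝ) : ℂ) by push_cast; ring,
      show (((y:ℝ):ℂ) - 1) = ((y - 1 : ℝ) : ℂ) by push_cast; ring,
      ← Complex.ofReal_cpow (by linarith)]
  rw [h2]
  rcases eq_or_lt_of_le ht0 with h0 | h0
  · rw [← h0]
    rw [Complex.ofReal_zero, Complex.zero_cpow (by
      intro h
      have := congrArg Complex.re h
      simp at this
      nlinarith)]
    rw [Real.zero_rpow (by nlinarith), Real.log_zero]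
    push_cast
    ring
  · have hne : (t:ℂ) ≠ 0 := Complex.ofReal_ne_zero.2 (ne_of_gt h0)
    rw [Complex.cpow_def_of_ne_zero hne, ← Complex.ofReal_log ht0]
    rw [show ((Real.log t : ℝ):ℂ) * (((x:ℝ):ℂ) + (ξ:ℝ) * Complex.I - 1)
        = ((Real.log t * (x-1) : ℝ):ℂ) + ((ξ * Real.log t : ℝ):ℂ) * Complex.I by push_cast; ring]
    rw [Complex.exp_add, ← Complex.ofReal_exp, Complex.exp_mul_I]
    rw [← Real.rpow_def_of_pos h0]
    rw [← Complex.ofReal_cos, ← Complex.ofReal_sin]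
    push_cast
    ring

lemma aux_beta (x y ξ : ℝ) (hx : 1 < x) (hx2 : x ≤ 2) (hy1 : 1 ≤ y) (hy2 : y ≤ 2)
    (hξ : 0 < ξ) (hξ' : ξ < 1/4) :
    0 < (Complex.betaIntegral ((x:ℝ) + (ξ:ℝ) * Complex.I) ((y:ℝ):ℂ)).re ∧
      (Complex.betaIntegral ((x:ℝ) + (ξ:ℝ) * Complex.I) ((y:ℝ):ℂ)).im < 0 := by
  have hπ := Real.pi_pos
  have hπ3 : (3:ℝ) ≤ π := by linarith [Real.pi_gt_three]
  set g : ℝ → ℝ := fun t => t^(x-1) * (1-t)^(y-1) with hg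
  set h₁ : ℝ → ℝ := fun t => g t * Real.cos (ξ * Real.log t) with hh1def
  set h₂ : ℝ → ℝ := fun t => g t * Real.sin (ξ * Real.log t) with hh2def
  set F : ℝ → ℂ := fun t => (t:ℂ)^(((x:ℝ):ℂ) + (ξ:ℝ) * Complex.I - 1) * (1 - (t:ℂ))^(((y:ℝ):ℂ) - 1) with hFdef
  have hF : IntervalIntegrable F MeasureTheory.volume 0 1 := by
    apply Complex.betaIntegral_convergent <;> simp <;> linarith
  have hFeq : ∀ t ∈ Set.Icc (0:ℝ) 1, F t = ((h₁ t : ℝ):ℂ) + ((h₂ t : ℝ):ℂ) * Complex.I := by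
    intro t ht
    exact F_eq x y ξ hx t ht.1 ht.2
  have hre_eq : ∀ t ∈ Set.Icc (0:ℝ) 1, (F t).re = h₁ t := by
    intro t ht; rw [hFeq t ht]; simp
  have him_eq : ∀ t ∈ Set.Icc (0:ℝ) 1, (F t).im = h₂ t := by
    intro t ht; rw [hFeq t ht]; simp
  -- bounds for g
  have hg0 : ∀ t ∈ Set.Icc (0:ℝ) 1, 0 ≤ g t := by
    intro t ht
    exact mul_nonneg (Real.rpow_nonneg ht.1 _) (Real.rpow_nonneg (by linarith [ht.2]) _)
  have hg1 : ∀ t ∈ Set.Icc (0:ℝ) 1, g t ≤ 1 := by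
    intro t ht
    have h1 : t^(x-1) ≤ 1 := Real.rpow_le_one ht.1 ht.2 (by linarith)
    have h2 : (1-t)^(y-1) ≤ 1 := Real.rpow_le_one (by linarith [ht.2]) (by linarith [ht.1]) (by linarith)
    have h3 := Real.rpow_nonneg ht.1 (x-1)
    show t ^ (x-1) * (1-t) ^ (y-1) ≤ 1
    nlinarith [Real.rpow_nonneg (show (0:ℝ) ≤ 1 - t by linarith [ht.2]) (y-1)]
  have hglb : ∀ t ∈ Set.Icc (0:ℝ) 1, t * (1-t) ≤ g t := by
    intro t ht
    rcases eq_or_lt_of_le ht.1 with h0 | h0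
    · rw [← h0]; simpa using hg0 0 (by norm_num)
    rcases eq_or_lt_of_le ht.2 with h1 | h1
    · rw [h1]; simpa using hg0 1 (by norm_num)
    have e1 : t ≤ t^(x-1) := by
      nth_rewrite 1 [← Real.rpow_one t]
      exact Real.rpow_le_rpow_of_exponent_ge h0 ht.2 (by linarith)
    have e2 : (1-t) ≤ (1-t)^(y-1) := by
      nth_rewrite 1 [← Real.rpow_one (1-t)]
      exact Real.rpow_le_rpow_of_exponent_ge (by linarith) (by linarith) (by linarith)
    exact mul_le_mul e1 e2 (by linarith) (Real.rpow_nonneg ht.1 _)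
  -- integrability
  have hFre : IntervalIntegrable (fun t => (F t).re) MeasureTheory.volume 0 1 := ⟨hF.1.re, hF.2.re⟩
  have hFim : IntervalIntegrable (fun t => (F t).im) MeasureTheory.volume 0 1 := ⟨hF.1.im, hF.2.im⟩
  have hIoc : Set.Ioc (0:ℝ) 1 ⊆ Set.Icc 0 1 := Set.Ioc_subset_Icc_self
  have hh₁ : IntervalIntegrable h₁ MeasureTheory.volume 0 1 := by
    refine ⟨hFre.1.congr_fun (fun t ht => hre_eq t (hIoc ht)) measurableSet_Ioc, ?_⟩
    rw [Set.Ioc_eq_empty (by norm_num)]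
    exact MeasureTheory.integrableOn_empty
  have hh₂ : IntervalIntegrable h₂ MeasureTheory.volume 0 1 := by
    refine ⟨hFim.1.congr_fun (fun t ht => him_eq t (hIoc ht)) measurableSet_Ioc, ?_⟩
    rw [Set.Ioc_eq_empty (by norm_num)]
    exact MeasureTheory.integrableOn_empty
  -- values
  have hBre : (Complex.betaIntegral ((x:ℝ) + (ξ:ℝ) * Complex.I) ((y:ℝ):ℂ)).re
      = ∫ t in (0:ℝ)..1, h₁ t := by
    have key := Complex.reCLM.intervalIntegral_comp_comm hF
    simp only [Complex.reCLM_apply] at key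
    rw [Complex.betaIntegral]
    show (∫ t in (0:ℝ)..1, F t).re = _
    rw [← key]
    exact intervalIntegral.integral_congr (fun t ht => hre_eq t (by rwa [Set.uIcc_of_le zero_le_one] at ht))
  have hBim : (Complex.betaIntegral ((x:ℝ) + (ξ:ℝ) * Complex.I) ((y:ℝ):ℂ)).im
      = ∫ t in (0:ℝ)..1, h₂ t := by
    have key := Complex.imCLM.intervalIntegral_comp_comm hF
    simp only [Complex.imCLM_apply] at key
    rw [Complex.betaIntegral]
    show (∫ t in (0:ℝ)..1, F t).im = _
    rw [← key]
    exact intervalIntegral.integral_congr (fun t ht => him_eq t (by rwa [Set.uIcc_of_le zero_le_one] at ht))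

  -- numeric exp/log facts
  have hexp1 := Real.exp_one_gt_d9
  have hexp3 : (16:ℝ) < Real.exp 3 := by
    rw [show (3:ℝ) = ((3:ℕ) * (1:ℝ)) by norm_num, Real.exp_nat_mul]
    calc (16:ℝ) < 2.7182818283 ^ 3 := by norm_num
      _ ≤ Real.exp 1 ^ 3 := pow_le_pow_left₀ (by norm_num) hexp1.le 3
  have hexp4 : (50:ℝ) < Real.exp 4 := by
    rw [show (4:ℝ) = ((4:ℕ) * (1:ℝ)) by norm_num, Real.exp_nat_mul]
    calc (50:ℝ) < 2.7182818283 ^ 4 := by norm_num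
      _ ≤ Real.exp 1 ^ 4 := pow_le_pow_left₀ (by norm_num) hexp1.le 4
  have hexp6 : (403:ℝ) < Real.exp 6 := by
    rw [show (6:ℝ) = ((6:ℕ) * (1:ℝ)) by norm_num, Real.exp_nat_mul]
    calc (403:ℝ) < 2.7182818283 ^ 6 := by norm_num
      _ ≤ Real.exp 1 ^ 6 := pow_le_pow_left₀ (by norm_num) hexp1.le 6
  have hexp2 : (4:ℝ) < Real.exp 2 := by
    rw [show (2:ℝ) = ((2:ℕ) * (1:ℝ)) by norm_num, Real.exp_nat_mul]
    calc (4:ℝ) < 2.7182818283 ^ 2 := by norm_num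
      _ ≤ Real.exp 1 ^ 2 := pow_le_pow_left₀ (by norm_num) hexp1.le 2
  have hlog50 : Real.log 50 ≤ 4 := by
    rw [Real.log_le_iff_le_exp (by norm_num)]; linarith
  have hlog16 : Real.log 16 ≤ 3 := by
    rw [Real.log_le_iff_le_exp (by norm_num)]; linarith
  have hlog4u : Real.log 4 ≤ 2 := by
    rw [Real.log_le_iff_le_exp (by norm_num)]; linarith
  -- polynomial integral
  have hpoly : ∀ a b : ℝ, (∫ t in a..b, (t - t^2)) = (b^2-a^2)/2 - (b^3-a^3)/3 := by
    intro a b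
    rw [intervalIntegral.integral_sub intervalIntegrable_id
      ((continuous_pow 2).intervalIntegrable a b), integral_id, integral_pow]
    push_cast
    ring
  -- integrability on subintervals
  have hsub1 : ∀ a b : ℝ, 0 ≤ a → a ≤ b → b ≤ 1 → IntervalIntegrable h₁ MeasureTheory.volume a b := by
    intro a b ha hab hb
    apply hh₁.mono_set
    rw [Set.uIcc_of_le hab, Set.uIcc_of_le zero_le_one]
    exact Set.Icc_subset_Icc ha hb
  have hsub2 : ∀ a b : ℝ, 0 ≤ a → a ≤ b → b ≤ 1 → IntervalIntegrable h₂ MeasureTheory.volume a b := by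
    intro a b ha hab hb
    apply hh₂.mono_set
    rw [Set.uIcc_of_le hab, Set.uIcc_of_le zero_le_one]
    exact Set.Icc_subset_Icc ha hb
  constructor
  · -- real part positive
    have hI1 : -(1/50 : ℝ) ≤ ∫ t in (0:ℝ)..(1/50), h₁ t := by
      have hm := intervalIntegral.integral_mono_on (a := 0) (b := 1/50)
        (μ := MeasureTheory.volume) (f := fun _ => (-1:ℝ)) (g := h₁)
        (by norm_num) intervalIntegrable_const (hsub1 0 (1/50) le_rfl (by norm_num) (by norm_num)) ?_
      · calc -(1/50:ℝ) = ∫ _t in (0:ℝ)..(1/50), (-1:ℝ) := by simp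
          _ ≤ _ := hm
      · intro t ht
        have ht01 : t ∈ Set.Icc (0:ℝ) 1 := ⟨ht.1, by linarith [ht.2]⟩
        have := hg0 t ht01
        have := hg1 t ht01
        show -1 ≤ g t * Real.cos (ξ * Real.log t)
        nlinarith [Real.neg_one_le_cos (ξ * Real.log t), Real.cos_le_one (ξ * Real.log t)]
    have hI2 : (1/2) * ((1 - (1/50:ℝ)^2)/2 - (1-(1/50:ℝ)^3)/3) ≤ ∫ t in (1/50:ℝ)..1, h₁ t := by
      have hm := intervalIntegral.integral_mono_on (a := 1/50) (b := 1)
        (μ := MeasureTheory.volume) (f := fun t => (1/2) * (t - t^2)) (g := h₁)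
        (by norm_num)
        (Continuous.intervalIntegrable (by fun_prop) _ _)
        (hsub1 (1/50) 1 (by norm_num) (by norm_num) le_rfl) ?_
      · calc (1/2) * ((1 - (1/50:ℝ)^2)/2 - (1-(1/50:ℝ)^3)/3)
            = ∫ t in (1/50:ℝ)..1, (1/2) * (t - t^2) := by
              rw [intervalIntegral.integral_const_mul, hpoly]; norm_num
          _ ≤ _ := hm
      · intro t ht
        have ht01 : t ∈ Set.Icc (0:ℝ) 1 := ⟨by linarith [ht.1], ht.2⟩
        have hlt : (0:ℝ) < t := lt_of_lt_of_le (by norm_num) ht.1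
        have hlogle : Real.log t ≤ 0 := Real.log_nonpos hlt.le ht.2
        have hlogge : -Real.log 50 ≤ Real.log t := by
          have h50 : Real.log (1/50 : ℝ) ≤ Real.log t :=
            (Real.log_le_log_iff (by norm_num) hlt).2 ht.1
          rwa [show (1/50:ℝ) = (50:ℝ)⁻¹ by norm_num, Real.log_inv] at h50
        have hθ1 : -1 ≤ ξ * Real.log t := by nlinarith
        have hθ2 : ξ * Real.log t ≤ 0 := by nlinarith
        have hcos : (1/2 : ℝ) ≤ Real.cos (ξ * Real.log t) := by
          nlinarith [Real.one_sub_sq_div_two_le_cos (x := ξ * Real.log t)]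
        show (1/2) * (t - t^2) ≤ g t * Real.cos (ξ * Real.log t)
        calc (1/2) * (t - t^2) = (t * (1-t)) * (1/2) := by ring
          _ ≤ g t * (1/2) := mul_le_mul_of_nonneg_right (hglb t ht01) (by norm_num)
          _ = (1/2) * g t := by ring
          _ ≤ Real.cos (ξ * Real.log t) * g t :=
              mul_le_mul_of_nonneg_right hcos (hg0 t ht01)
          _ = g t * Real.cos (ξ * Real.log t) := by ring
    have hsplit : (∫ t in (0:ℝ)..1, h₁ t)
        = (∫ t in (0:ℝ)..(1/50), h₁ t) + ∫ t in (1/50:ℝ)..1, h₁ t :=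
      (intervalIntegral.integral_add_adjacent_intervals
        (hsub1 0 (1/50) le_rfl (by norm_num) (by norm_num)) (hsub1 (1/50) 1 (by norm_num) (by norm_num) le_rfl)).symm
    rw [hBre, hsplit]
    nlinarith [hI1, hI2]
  · -- imaginary part negative
    set t₁ : ℝ := Real.exp (-(π/ξ)) with ht₁def
    have ht₁pos : 0 < t₁ := Real.exp_pos _
    have hπξ : 12 ≤ π/ξ := by
      rw [le_div_iff₀ hξ]; nlinarith
    have ht₁16 : t₁ ≤ 1/16 := by
      have h1 : t₁ ≤ Real.exp (-3) := Real.exp_le_exp.2 (by linarith)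
      have h2 : Real.exp (-3) ≤ 1/16 := by
        rw [Real.exp_neg]
        have := inv_anti₀ (by norm_num : (0:ℝ) < 16) hexp3.le
        simpa using this
      linarith
    -- key smallness of t₁
    have hkey : 1209 * t₁ ≤ 2 * ξ := by
      set E : ℝ := Real.exp (π/(2*ξ)) with hEdef
      have hEpos : 0 < E := Real.exp_pos _
      have hE1 : (403:ℝ) ≤ E := by
        have h6 : (6:ℝ) ≤ π/(2*ξ) := by
          rw [le_div_iff₀ (by linarith)]; nlinarith
        have := Real.exp_le_exp.2 h6
        linarith
      have hE2 : (3:ℝ) ≤ E * (2*ξ) := by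
        have ha := Real.add_one_le_exp (π/(2*ξ))
        have hb : π/(2*ξ) ≤ E := by linarith
        have hc : (π/(2*ξ)) * (2*ξ) = π := div_mul_cancel₀ π (by linarith)
        nlinarith [mul_le_mul_of_nonneg_right hb (by linarith : (0:ℝ) ≤ 2*ξ)]
      have hEsq : t₁ * (E * E) = 1 := by
        rw [ht₁def, hEdef, ← Real.exp_add, ← Real.exp_add, ← Real.exp_zero]
        congr 1
        field_simp
        ring
      have h2ξ : (1209:ℝ) ≤ (2*ξ) * (E * E) := by
        nlinarith [mul_le_mul_of_nonneg_right hE2 hEpos.le,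
          mul_le_mul_of_nonneg_left hE1 (by norm_num : (0:ℝ) ≤ 3)]
      nlinarith [mul_le_mul_of_nonneg_right h2ξ ht₁pos.le]
    -- pieces
    have hJ0 : (∫ t in (0:ℝ)..t₁, h₂ t) ≤ t₁ := by
      have hm := intervalIntegral.integral_mono_on (a := 0) (b := t₁)
        (μ := MeasureTheory.volume) (f := h₂) (g := fun _ => (1:ℝ))
        ht₁pos.le (hsub2 0 t₁ le_rfl ht₁pos.le (by linarith)) intervalIntegrable_const ?_
      · calc (∫ t in (0:ℝ)..t₁, h₂ t) ≤ ∫ _t in (0:ℝ)..t₁, (1:ℝ) := hm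
          _ = t₁ := by simp
      · intro t ht
        have ht01 : t ∈ Set.Icc (0:ℝ) 1 := ⟨ht.1, by linarith [ht.2]⟩
        have := hg0 t ht01
        have := hg1 t ht01
        show g t * Real.sin (ξ * Real.log t) ≤ 1
        nlinarith [Real.sin_le_one (ξ * Real.log t), Real.neg_one_le_sin (ξ * Real.log t)]
    have hJa : (∫ t in t₁..(1/16:ℝ), h₂ t) ≤ 0 := by
      have hm := intervalIntegral.integral_mono_on (a := t₁) (b := 1/16)
        (μ := MeasureTheory.volume) (f := h₂) (g := fun _ => (0:ℝ))
        ht₁16 (hsub2 t₁ (1/16) ht₁pos.le ht₁16 (by norm_num)) intervalIntegrable_const ?_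
      · simpa using hm
      · intro t ht
        have ht01 : t ∈ Set.Icc (0:ℝ) 1 := ⟨by linarith [ht.1], by linarith [ht.2]⟩
        have hlt : 0 < t := lt_of_lt_of_le ht₁pos ht.1
        have hloget₁ : Real.log t₁ = -(π/ξ) := Real.log_exp _
        have hlogge : -(π/ξ) ≤ Real.log t := by
          rw [← hloget₁]
          exact (Real.log_le_log_iff ht₁pos hlt).2 ht.1
        have hlogle : Real.log t ≤ 0 := Real.log_nonpos hlt.le (by linarith [ht.2])
        have hθ1 : -π ≤ ξ * Real.log t := by
          have hc : ξ * (-(π/ξ)) = -π := by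
            rw [mul_neg, mul_comm, div_mul_cancel₀ _ (ne_of_gt hξ)]
          nlinarith [mul_le_mul_of_nonneg_left hlogge hξ.le]
        have hθ2 : ξ * Real.log t ≤ 0 := by nlinarith
        have hsin : Real.sin (ξ * Real.log t) ≤ 0 :=
          Real.sin_nonpos_of_nonpos_of_neg_pi_le hθ2 hθ1
        show g t * Real.sin (ξ * Real.log t) ≤ 0
        exact mul_nonpos_of_nonneg_of_nonpos (hg0 t ht01) hsin
    have hJc : (∫ t in (1/4:ℝ)..1, h₂ t) ≤ 0 := by
      have hm := intervalIntegral.integral_mono_on (a := 1/4) (b := 1)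
        (μ := MeasureTheory.volume) (f := h₂) (g := fun _ => (0:ℝ))
        (by norm_num) (hsub2 (1/4) 1 (by norm_num) (by norm_num) le_rfl) intervalIntegrable_const ?_
      · simpa using hm
      · intro t ht
        have ht01 : t ∈ Set.Icc (0:ℝ) 1 := ⟨by linarith [ht.1], ht.2⟩
        have hlt : (0:ℝ) < t := lt_of_lt_of_le (by norm_num) ht.1
        have hlogge : -Real.log 4 ≤ Real.log t := by
          have h4 : Real.log ((4:ℝ)⁻¹) ≤ Real.log t :=
            (Real.log_le_log_iff (by norm_num) hlt).2 (by linarith [ht.1])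
          rwa [Real.log_inv] at h4
        have hlogle : Real.log t ≤ 0 := Real.log_nonpos hlt.le ht.2
        have hθ1 : -π ≤ ξ * Real.log t := by nlinarith
        have hθ2 : ξ * Real.log t ≤ 0 := by nlinarith
        have hsin : Real.sin (ξ * Real.log t) ≤ 0 :=
          Real.sin_nonpos_of_nonpos_of_neg_pi_le hθ2 hθ1
        show g t * Real.sin (ξ * Real.log t) ≤ 0
        exact mul_nonpos_of_nonneg_of_nonpos (hg0 t ht01) hsin
    have hJb : (∫ t in (1/16:ℝ)..(1/4:ℝ), h₂ t) ≤ -(ξ/2) * (99/4096) := by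
      have hsinξ : ξ/2 ≤ Real.sin ξ := by
        nlinarith [Real.sin_gt_sub_cube hξ, sq_nonneg ξ, mul_pos hξ hξ, mul_pos (mul_pos hξ hξ) hξ]
      have hm := intervalIntegral.integral_mono_on (a := 1/16) (b := 1/4)
        (μ := MeasureTheory.volume) (f := h₂) (g := fun t => (-(ξ/2)) * (t - t^2))
        (by norm_num) (hsub2 (1/16) (1/4) (by norm_num) (by norm_num) (by norm_num))
        (Continuous.intervalIntegrable (by fun_prop) _ _) ?_
      · calc (∫ t in (1/16:ℝ)..(1/4:ℝ), h₂ t)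
            ≤ ∫ t in (1/16:ℝ)..(1/4:ℝ), (-(ξ/2)) * (t - t^2) := hm
          _ = -(ξ/2) * (99/4096) := by
              rw [intervalIntegral.integral_const_mul, hpoly]; norm_num
      · intro t ht
        have ht01 : t ∈ Set.Icc (0:ℝ) 1 := ⟨by linarith [ht.1], by linarith [ht.2]⟩
        have hlt : (0:ℝ) < t := lt_of_lt_of_le (by norm_num) ht.1
        have hlogge : -Real.log 16 ≤ Real.log t := by
          have h16 : Real.log ((16:ℝ)⁻¹) ≤ Real.log t :=
            (Real.log_le_log_iff (by norm_num) hlt).2 (by linarith [ht.1])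
          rwa [Real.log_inv] at h16
        have hlogle : Real.log t ≤ -Real.log 4 := by
          have h4 : Real.log t ≤ Real.log ((4:ℝ)⁻¹) :=
            (Real.log_le_log_iff hlt (by norm_num)).2 (by linarith [ht.2])
          rwa [Real.log_inv] at h4
        have hlog4l : (1:ℝ) ≤ Real.log 4 := by
          rw [Real.le_log_iff_exp_le (by norm_num)]
          nlinarith [Real.exp_one_lt_d9]
        -- -θ ∈ [ξ, 3ξ]
        have hu1 : ξ ≤ -(ξ * Real.log t) := by nlinarith
        have hu2 : -(ξ * Real.log t) ≤ 3*ξ := by nlinarith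
        have hmem1 : ξ ∈ Set.Icc (-(π/2)) (π/2) := ⟨by linarith, by linarith⟩
        have hmem2 : -(ξ * Real.log t) ∈ Set.Icc (-(π/2)) (π/2) :=
          ⟨by linarith, by linarith⟩
        have hmono := Real.strictMonoOn_sin.monotoneOn hmem1 hmem2 hu1
        have hsθ : Real.sin (ξ * Real.log t) ≤ -(ξ/2) := by
          have : Real.sin (ξ * Real.log t) = -Real.sin (-(ξ * Real.log t)) := by
            rw [Real.sin_neg]; ring
          rw [this]
          linarith
        show g t * Real.sin (ξ * Real.log t) ≤ (-(ξ/2)) * (t - t^2)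
        calc g t * Real.sin (ξ * Real.log t)
            ≤ (t * (1-t)) * Real.sin (ξ * Real.log t) :=
              mul_le_mul_of_nonpos_right (hglb t ht01) (by linarith)
          _ ≤ (t * (1-t)) * (-(ξ/2)) := by
              apply mul_le_mul_of_nonneg_left hsθ
              nlinarith [ht01.1, ht01.2]
          _ = (-(ξ/2)) * (t - t^2) := by ring
    -- split the integral into four pieces
    have e1 : (∫ t in (0:ℝ)..(1/16:ℝ), h₂ t)
        = (∫ t in (0:ℝ)..t₁, h₂ t) + ∫ t in t₁..(1/16:ℝ), h₂ t :=
      (intervalIntegral.integral_add_adjacent_intervals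
        (hsub2 0 t₁ le_rfl ht₁pos.le (by linarith)) (hsub2 t₁ (1/16) ht₁pos.le ht₁16 (by norm_num))).symm
    have e2 : (∫ t in (0:ℝ)..(1/4:ℝ), h₂ t)
        = (∫ t in (0:ℝ)..(1/16:ℝ), h₂ t) + ∫ t in (1/16:ℝ)..(1/4:ℝ), h₂ t :=
      (intervalIntegral.integral_add_adjacent_intervals
        (hsub2 0 (1/16) le_rfl (by norm_num) (by norm_num)) (hsub2 (1/16) (1/4) (by norm_num) (by norm_num) (by norm_num))).symm
    have e3 : (∫ t in (0:ℝ)..1, h₂ t)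
        = (∫ t in (0:ℝ)..(1/4:ℝ), h₂ t) + ∫ t in (1/4:ℝ)..1, h₂ t :=
      (intervalIntegral.integral_add_adjacent_intervals
        (hsub2 0 (1/4) le_rfl (by norm_num) (by norm_num)) (hsub2 (1/4) 1 (by norm_num) (by norm_num) le_rfl)).symm
    rw [hBim, e3, e2, e1]
    nlinarith [hJ0, hJa, hJb, hJc, hkey]


/-- For `1/2 ≤ α < 1`, `0 < ξ < 1/4` and `1+α ≤ τ < 2`, one has
`−π < arg T_s ≤ −π/2 < arg T_B < 0` (principal argument); in particular
`arg T_s ≠ arg T_B`. -/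
theorem arg_Ts_le_neg_pi_div_two_lt_arg_TB
    (α τ ξ : ℝ) (hα : 1 / 2 ≤ α) (hα' : α < 1) (hξ : 0 < ξ) (hξ' : ξ < 1 / 4)
    (hτ : 1 + α ≤ τ) (hτ' : τ < 2) :
    (-Real.pi < Complex.arg (Ts α τ ξ) ∧ Complex.arg (Ts α τ ξ) ≤ -(Real.pi / 2)) ∧
      (-(Real.pi / 2) < Complex.arg (TB α τ ξ) ∧ Complex.arg (TB α τ ξ) < 0) ∧
      Complex.arg (Ts α τ ξ) ≠ Complex.arg (TB α τ ξ) := by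
  have hπ := Real.pi_pos
  obtain ⟨hre, him⟩ := aux_Ts α τ ξ hα hα' hξ hτ hτ'
  have hargTs_le : Complex.arg (Ts α τ ξ) ≤ -(Real.pi/2) := by
    by_contra hcon
    push_neg at hcon
    rcases Complex.neg_pi_div_two_lt_arg_iff.mp hcon with h | h
    · linarith
    · linarith
  have hargTs_gt : -Real.pi < Complex.arg (Ts α τ ξ) := Complex.neg_pi_lt_arg _
  have hTBeq := TB_eq α τ ξ (by linarith) hα' hξ hτ
  have hr : 0 < Real.sin (π*α)/π :=
    div_pos (Real.sin_pos_of_pos_of_lt_pi (by nlinarith) (by nlinarith)) Real.pi_pos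
  obtain ⟨hBre, hBim⟩ := aux_beta (τ - 2*α + 1) (2*α) ξ (by linarith) (by linarith)
    (by linarith) (by linarith) hξ hξ'
  have hargTB : Complex.arg (TB α τ ξ)
      = Complex.arg (Complex.betaIntegral (((τ - 2*α + 1 : ℝ):ℂ) + ((ξ:ℝ):ℂ) * Complex.I) (((2*α : ℝ)):ℂ)) := by
    rw [hTBeq]
    exact Complex.arg_real_mul _ hr
  have h1 : -(Real.pi/2) < Complex.arg (TB α τ ξ) := by
    rw [hargTB]
    exact Complex.neg_pi_div_two_lt_arg_iff.mpr (Or.inl hBre)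
  have h2 : Complex.arg (TB α τ ξ) < 0 := by
    rw [hargTB]
    exact Complex.arg_neg_iff.mpr hBim
  exact ⟨⟨hargTs_gt, hargTs_le⟩, ⟨h1, h2⟩, by intro h; rw [h] at hargTs_le; linarith⟩
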